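/- Let K be a torsion-free group and let α be an automorphism of K with a periodic conjugacy class, i.e. there exist k ∈ K with k ≠ e, an integer n ≠ 0, and c ∈ K with αⁿ(k) = c k c⁻¹. Then the semidirect product G = K ⋊_α ℤ contains a subgroup isomorphic to ℤ × ℤ (namely the subgroup generated by k and c⁻¹tⁿ, where t is the generator of the ℤ factor). -/

import Mathlib

/-- The action of `Multiplicative ℤ` on `K` whose generator acts by the automorphism `α`. -/
def zAction {K : Type*} [Group K] (α : MulAut K) : Multiplicative ℤ →* MulAut K where
  toFun n := α ^ (Multiplicative.toAdd n)
  map_one' := by simp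
  map_mul' m n := by simp [zpow_add]

/-- The semidirect product `K ⋊_α ℤ`, i.e. the non-proper HNN extension of `K` by `α`. -/
abbrev zSemidirect (K : Type*) [Group K] (α : MulAut K) :=
  SemidirectProduct K (Multiplicative ℤ) (zAction α)

/-- If `K` is torsion-free and `α` has a periodic conjugacy class,
i.e. `αⁿ(k) = c k c⁻¹` with `k ≠ 1`, `n ≠ 0`, then `G = K ⋊_α ℤ` contains a subgroup
isomorphic to `ℤ × ℤ`, namely the subgroup generated by `k` and `c⁻¹ tⁿ` (where `t` is
the generator of the `ℤ` factor). -/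
theorem statement14 {K : Type*} [Group K] (htf : ∀ g : K, g ≠ 1 → ¬IsOfFinOrder g)
    (α : MulAut K) (k : K) (n : ℤ) (c : K) (hk : k ≠ 1) (hn : n ≠ 0)
    (h : (α ^ n) k = c * k * c⁻¹) :
    Nonempty (↥(Subgroup.closure ({SemidirectProduct.inl k,
        SemidirectProduct.inl c⁻¹ * SemidirectProduct.inr (Multiplicative.ofAdd n)} :
        Set (zSemidirect K α))) ≃* Multiplicative (ℤ × ℤ)) := by
  set a : zSemidirect K α := SemidirectProduct.inl k with ha
  set b : zSemidirect K α :=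
    SemidirectProduct.inl c⁻¹ * SemidirectProduct.inr (Multiplicative.ofAdd n) with hb
  -- the conjugation relation inside the semidirect product
  have key : SemidirectProduct.inr (Multiplicative.ofAdd n) * SemidirectProduct.inl k =
      (SemidirectProduct.inl ((α ^ n) k) : zSemidirect K α) *
        SemidirectProduct.inr (Multiplicative.ofAdd n) := by
    have := SemidirectProduct.inl_aut (φ := zAction α) (Multiplicative.ofAdd n) k
    have h2 : (zAction α (Multiplicative.ofAdd n)) k = (α ^ n) k := rfl
    rw [h2] at this
    rw [this, mul_assoc, mul_assoc]
    simp
  have hab : Commute a b := by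
    show a * b = b * a
    rw [ha, hb]
    conv_rhs => rw [mul_assoc, key]
    rw [h]
    simp only [← mul_assoc, ← map_mul]
    congr 2
    group
  -- the homomorphism (i, j) ↦ a^i * b^j
  let f : Multiplicative (ℤ × ℤ) →* zSemidirect K α :=
    { toFun := fun p => a ^ (Multiplicative.toAdd p).1 * b ^ (Multiplicative.toAdd p).2
      map_one' := by simp
      map_mul' := fun p q => by
        simp only [toAdd_mul, Prod.fst_add, Prod.snd_add, zpow_add]
        exact ((Commute.mul_mul_mul_comm (hab.symm.zpow_zpow _ _) _ _)).symm }
  have hfa : ∀ p : Multiplicative (ℤ × ℤ),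
      f p = a ^ (Multiplicative.toAdd p).1 * b ^ (Multiplicative.toAdd p).2 := fun _ => rfl
  -- injectivity
  have hinj : Function.Injective f := by
    rw [injective_iff_map_eq_one]
    intro p hp
    rw [hfa] at hp
    set i := (Multiplicative.toAdd p).1
    set j := (Multiplicative.toAdd p).2
    have hr := congrArg SemidirectProduct.rightHom hp
    simp only [map_mul, map_zpow, map_one, ha, hb, SemidirectProduct.rightHom_inl,
      SemidirectProduct.rightHom_inr, one_zpow, one_mul] at hr
    have hj : j = 0 := by
      have : (Multiplicative.ofAdd n) ^ j = 1 := hr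
      rw [← ofAdd_zsmul] at this
      have := Multiplicative.ofAdd.injective this
      simpa [hn] using this
    rw [hj] at hp
    simp only [zpow_zero, mul_one] at hp
    have hi : i = 0 := by
      by_contra hi
      have hkfin : IsOfFinOrder k := isOfFinOrder_iff_zpow_eq_one.mpr ⟨i, hi, by
        have : (SemidirectProduct.inl (k ^ i) : zSemidirect K α) = 1 := by
          rw [map_zpow]; exact hp
        exact SemidirectProduct.inl_injective (by simpa using this)⟩
      exact htf k hk hkfin
    have : p = Multiplicative.ofAdd ((0 : ℤ), (0 : ℤ)) := by
      have : Multiplicative.toAdd p = (0, 0) := Prod.ext hi hj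
      simp [← this]
    simp [this]
  -- the range of f is the closure of {a, b}
  have hrange : Subgroup.closure ({a, b} : Set (zSemidirect K α)) = f.range := by
    apply le_antisymm
    · rw [Subgroup.closure_le]
      rintro x (rfl | rfl)
      · exact ⟨Multiplicative.ofAdd (1, 0), by simp [hfa]⟩
      · exact ⟨Multiplicative.ofAdd (0, 1), by simp [hfa]⟩
    · rintro x ⟨p, rfl⟩
      rw [hfa]
      have hma : a ∈ Subgroup.closure ({a, b} : Set (zSemidirect K α)) :=
        Subgroup.subset_closure (Set.mem_insert _ _)
      have hmb : b ∈ Subgroup.closure ({a, b} : Set (zSemidirect K α)) :=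
        Subgroup.subset_closure (Set.mem_insert_of_mem _ rfl)
      exact mul_mem (zpow_mem hma _) (zpow_mem hmb _)
  exact ⟨(MulEquiv.subgroupCongr hrange).trans (MonoidHom.ofInjective hinj).symm⟩
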